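/- Fix s ∈ [0, u_max] and D ≥ 0, and consider the constraint set S = {z ∈ ℐ_b : k(s, z) ≤ D} of the right-boundary invariance problem. Then: (a) S is nonempty if and only if k(s, û) ≤ D; (b) if k(s, u_max/4) ≤ D, then z = u_max/4 belongs to S and minimizes z ↦ z² over S; (c) if k(s, û) ≤ D < k(s, u_max/4), then there exists a unique z* ∈ (u_max/4, û] with k(s, z*) = D, every z ∈ S satisfies z ≥ z*, and z* minimizes z ↦ z² over S. -/
import Mathlib


/-- Feasibility and optimal solution of the right-boundary invariance problem:
for fixed `s ∈ [0, u_max]` and `D ≥ 0`, with constraint set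
`S = {z ∈ ℐ_b : k(s, z) ≤ D}`, `ℐ_b = [u_max/4, u_max]`:
(a) `S` is nonempty iff `k(s, û) ≤ D`;
(b) if `k(s, u_max/4) ≤ D` then `z = u_max/4 ∈ S` and it minimizes `z ↦ z²`
over `S`;
(c) if `k(s, û) ≤ D < k(s, u_max/4)` then there is a unique
`z* ∈ (u_max/4, û]` with `k(s, z*) = D`, every `z ∈ S` satisfies `z ≥ z*`,
and `z*` minimizes `z ↦ z²` over `S`. -/
theorem right_invariance_feasibility
    (umax uhat : ℝ) (f F : ℝ → ℝ) (k : ℝ → ℝ → ℝ)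
    (humax : 0 < umax)
    (huhat : uhat = umax / 2)
    (hf : ∀ u : ℝ, f u = u * (1 - u / umax))
    (hF : ∀ u : ℝ, F u = u ^ 2 / 2 - u ^ 3 / (3 * umax))
    (hk : ∀ s z : ℝ, k s z = s * f s - z * f z - F s + F z) :
    ∀ s ∈ Set.Icc (0 : ℝ) umax, ∀ D : ℝ, 0 ≤ D →
      ({z ∈ Set.Icc (umax / 4) umax | k s z ≤ D}.Nonempty ↔ k s uhat ≤ D) ∧
      (k s (umax / 4) ≤ D →
        umax / 4 ∈ {z ∈ Set.Icc (umax / 4) umax | k s z ≤ D} ∧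
        ∀ z ∈ {z ∈ Set.Icc (umax / 4) umax | k s z ≤ D},
          (umax / 4) ^ 2 ≤ z ^ 2) ∧
      (k s uhat ≤ D → D < k s (umax / 4) →
        ∃ zstar ∈ Set.Ioc (umax / 4) uhat,
          k s zstar = D ∧
          (∀ z ∈ Set.Ioc (umax / 4) uhat, k s z = D → z = zstar) ∧
          (∀ z ∈ {z ∈ Set.Icc (umax / 4) umax | k s z ≤ D}, zstar ≤ z) ∧
          zstar ∈ {z ∈ Set.Icc (umax / 4) umax | k s z ≤ D} ∧
          (∀ z ∈ {z ∈ Set.Icc (umax / 4) umax | k s z ≤ D},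
            zstar ^ 2 ≤ z ^ 2)) := by
  intro s _hs D hD
  have h6u : (0:ℝ) < 6 * umax := by linarith
  -- rewrite k s z in a convenient form
  have hk' : ∀ z : ℝ, k s z = (s * f s - F s) - z ^ 2 / 2 + 2 * z ^ 3 / (3 * umax) := by
    intro z
    rw [hk, hF z, hf z]
    field_simp
    ring
  have hdiff : ∀ a b : ℝ, k s b - k s a =
      ((4 * b ^ 3 - 3 * umax * b ^ 2) - (4 * a ^ 3 - 3 * umax * a ^ 2)) / (6 * umax) := by
    intro a b
    rw [hk' a, hk' b]
    field_simp
    ring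
  have hle : ∀ a b : ℝ, k s a ≤ k s b ↔
      4 * a ^ 3 - 3 * umax * a ^ 2 ≤ 4 * b ^ 3 - 3 * umax * b ^ 2 := by
    intro a b
    rw [← sub_nonneg, hdiff a b, le_div_iff₀ h6u, zero_mul, sub_nonneg]
  have hlt : ∀ a b : ℝ, k s a < k s b ↔
      4 * a ^ 3 - 3 * umax * a ^ 2 < 4 * b ^ 3 - 3 * umax * b ^ 2 := by
    intro a b
    rw [← sub_pos, hdiff a b, lt_div_iff₀ h6u, zero_mul, sub_pos]
  -- global minimum of P at umax/2 (for z ≥ 0)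
  have hmin : ∀ z : ℝ, 0 ≤ z → k s (umax / 2) ≤ k s z := by
    intro z hz
    rw [hle]
    nlinarith [sq_nonneg (z - umax / 2), mul_nonneg (sq_nonneg (z - umax / 2)) hz,
      mul_nonneg (sq_nonneg (z - umax / 2)) humax.le]
  -- strict decrease on [0, umax/2]
  have hdec : ∀ a b : ℝ, 0 ≤ a → a < b → b ≤ umax / 2 → k s b < k s a := by
    intro a b ha hab hb
    rw [hlt]
    nlinarith [mul_pos (sub_pos.2 hab) (by nlinarith : (0:ℝ) < b + 2 * a),
      mul_nonneg (by nlinarith : (0:ℝ) ≤ 3 * umax - 6 * b) (by nlinarith : (0:ℝ) ≤ a + b),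
      sub_pos.2 hab]
  have hq : umax / 4 ≤ umax := by linarith
  have hq2 : umax / 4 ≤ umax / 2 := by linarith
  have hq0 : (0:ℝ) ≤ umax / 4 := by linarith
  refine ⟨?_, ?_, ?_⟩
  · -- part (a)
    constructor
    · rintro ⟨z, ⟨⟨hz1, hz2⟩, hzk⟩⟩
      rw [huhat]
      exact le_trans (hmin z (le_trans hq0 hz1)) hzk
    · intro h
      exact ⟨uhat, ⟨by rw [huhat]; exact ⟨hq2, by linarith⟩, h⟩⟩
  · -- part (b)
    intro h
    refine ⟨⟨⟨le_refl _, hq⟩, h⟩, ?_⟩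
    rintro z ⟨⟨hz1, hz2⟩, hzk⟩
    nlinarith [hq0, hz1]
  · -- part (c)
    intro h1 h2
    rw [huhat] at h1 ⊢
    -- continuity of k s
    have hcont : ContinuousOn (fun z => k s z) (Set.Icc (umax / 4) (umax / 2)) := by
      have heq : (fun z => k s z) =
          fun z => (s * f s - F s) - z ^ 2 / 2 + 2 * z ^ 3 / (3 * umax) := funext hk'
      rw [heq]
      fun_prop
    have hIVT := intermediate_value_Icc' hq2 hcont
    have hD : D ∈ Set.Icc (k s (umax / 2)) (k s (umax / 4)) := ⟨h1, h2.le⟩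
    obtain ⟨zstar, hzmem, hzval⟩ := hIVT hD
    have hzval : k s zstar = D := hzval
    obtain ⟨hz1, hz2⟩ := hzmem
    have hzne : umax / 4 < zstar := by
      rcases lt_or_eq_of_le hz1 with h | h
      · exact h
      · exfalso; rw [← h] at hzval; linarith
    -- key: every feasible z is ≥ zstar
    have hgeq : ∀ z ∈ {z ∈ Set.Icc (umax / 4) umax | k s z ≤ D}, zstar ≤ z := by
      rintro z ⟨⟨hw1, hw2⟩, hwk⟩
      by_contra hcon
      push_neg at hcon
      have := hdec z zstar (le_trans hq0 hw1) hcon hz2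
      rw [hzval] at this
      linarith
    have hzS : zstar ∈ {z ∈ Set.Icc (umax / 4) umax | k s z ≤ D} :=
      ⟨⟨hz1, by linarith⟩, hzval.le⟩
    refine ⟨zstar, ⟨hzne, hz2⟩, hzval, ?_, hgeq, hzS, ?_⟩
    · rintro z ⟨hza, hzb⟩ hzk
      rcases lt_trichotomy z zstar with h | h | h
      · have := hdec z zstar (le_trans hq0 hza.le) h hz2
        rw [hzval, hzk] at this; linarith
      · exact h
      · have := hdec zstar z (le_trans hq0 hz1) h hzb
        rw [hzval, hzk] at this; linarith
    · intro z hz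
      have h1' := hgeq z hz
      have hz0 : 0 ≤ zstar := le_trans hq0 hz1
      nlinarith
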